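/- For every natural number n, the n-th derivative of the function h(z) = 1/(e^{-z} - 1) satisfies h^{(n)}(z) = e^z A_n(e^z) / (1 - e^z)^{n+1} for all z with e^z ≠ 1, where A_n is the n-th Eulerian polynomial. -/

import Mathlib

open Complex Polynomial Filter

/-- The Eulerian polynomials, defined by the recurrence
`A 0 = 1`, `A (n+1) = (1 + n*X) * A n + X*(1-X) * (A n)'`. -/
noncomputable def eulerianPoly : ℕ → Polynomial ℤ
  | 0 => 1
  | n + 1 => (1 + Polynomial.C (n : ℤ) * Polynomial.X) * eulerianPoly n
      + Polynomial.X * (1 - Polynomial.X) * Polynomial.derivative (eulerianPoly n)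

/-- The Eulerian numbers `E(n,k)`, coefficients of the Eulerian polynomials. -/
noncomputable def eulerianNum (n k : ℕ) : ℤ := (eulerianPoly n).coeff k

theorem iteratedDeriv_one_div_exp_neg_sub_one (n : ℕ) (z : ℂ) (hz : Complex.exp z ≠ 1) :
    iteratedDeriv n (fun z : ℂ => 1 / (Complex.exp (-z) - 1)) z =
      Complex.exp z * Polynomial.aeval (Complex.exp z) (eulerianPoly n) /
        (1 - Complex.exp z) ^ (n + 1) := by
  induction n generalizing z with
  | zero =>
    have hw : Complex.exp z ≠ 0 := Complex.exp_ne_zero z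
    have h1 : 1 - Complex.exp z ≠ 0 := sub_ne_zero.mpr (Ne.symm hz)
    simp only [iteratedDeriv_zero, eulerianPoly, map_one, mul_one, pow_one]
    rw [Complex.exp_neg]
    field_simp
    ring
  | succ n ih =>
    have hw : Complex.exp z ≠ 0 := Complex.exp_ne_zero z
    have h1 : 1 - Complex.exp z ≠ 0 := sub_ne_zero.mpr (Ne.symm hz)
    rw [iteratedDeriv_succ]
    set Q : Polynomial ℂ := (eulerianPoly n).map (algebraMap ℤ ℂ) with hQ
    have haev : ∀ w : ℂ, Polynomial.aeval w (eulerianPoly n) = Q.eval w := by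
      intro w; rw [hQ, Polynomial.eval_map, Polynomial.aeval_def]
    have haev' : ∀ w : ℂ, Polynomial.aeval w (Polynomial.derivative (eulerianPoly n))
        = (Polynomial.derivative Q).eval w := by
      intro w
      rw [hQ, Polynomial.derivative_map, Polynomial.eval_map, Polynomial.aeval_def]
    -- eventual equality
    have hopen : IsOpen {w : ℂ | Complex.exp w ≠ 1} :=
      isOpen_ne.preimage Complex.continuous_exp
    have hev : (fun w => iteratedDeriv n (fun z : ℂ => 1 / (Complex.exp (-z) - 1)) w)
        =ᶠ[nhds z] fun w => Complex.exp w * Q.eval (Complex.exp w) /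
          (1 - Complex.exp w) ^ (n + 1) := by
      filter_upwards [hopen.mem_nhds hz] with w hw1
      rw [ih w hw1, haev]
    rw [hev.deriv_eq]
    -- compute the derivative of the closed form
    have hde : HasDerivAt Complex.exp (Complex.exp z) z := Complex.hasDerivAt_exp z
    have hu : HasDerivAt (fun w => Complex.exp w * Q.eval (Complex.exp w))
        (Complex.exp z * Q.eval (Complex.exp z) +
          Complex.exp z * ((Polynomial.derivative Q).eval (Complex.exp z) * Complex.exp z)) z :=
      hde.mul ((Q.hasDerivAt (Complex.exp z)).comp z hde)
    have hv : HasDerivAt (fun w => (1 - Complex.exp w) ^ (n + 1))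
        (((n : ℂ) + 1) * (1 - Complex.exp z) ^ n * (-Complex.exp z)) z := by
      have := (((hasDerivAt_const z (1 : ℂ)).fun_sub hde).fun_pow (n + 1))
      simpa using this
    have hvne : (1 - Complex.exp z) ^ (n + 1) ≠ 0 := pow_ne_zero _ h1
    have hd := (hu.fun_div hv hvne).deriv
    rw [hd]
    -- algebra
    set w := Complex.exp z
    set a := Q.eval w
    set b := (Polynomial.derivative Q).eval w
    have hrec : Polynomial.aeval w (eulerianPoly (n + 1)) =
        (1 + (n : ℂ) * w) * a + w * (1 - w) * b := by
      show Polynomial.aeval w ((1 + Polynomial.C (n : ℤ) * Polynomial.X) * eulerianPoly n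
        + Polynomial.X * (1 - Polynomial.X) * Polynomial.derivative (eulerianPoly n)) = _
      simp only [map_add, map_mul, map_one, map_sub, Polynomial.aeval_X, Polynomial.aeval_C,
        haev, haev']
      push_cast
      ring
    rw [hrec]
    field_simp
    ring
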